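/- Let p be an odd prime, e ≥ 1, g an integer not divisible by p, and m the multiplicative order of g modulo p. Then the number of pairs (x, c) with x ∈ {1, 2, ..., m·p^e}, c ∈ {1, 2, ..., m·p^(e-1)}, p ∤ x, and g^(x-1+c) ≡ x (mod p^e) is exactly m²·p^(e-1). -/

import Mathlib

open Finset

lemma welch_cnt (d : ℤ) (hd : 0 < d) (k : ℕ) (v : ℤ) :
    ((Finset.Ioc (0:ℤ) (k*d)).filter (fun c => c ≡ v [ZMOD d])).card = k := by
  have h := Int.Ioc_filter_modEq_card 0 ((k:ℤ)*d) hd v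
  have hd' : (d:ℚ) ≠ 0 := by exact_mod_cast hd.ne'
  have h1 : (((((k:ℤ)*d : ℤ)):ℚ) - (v:ℚ))/(d:ℚ) = ((k:ℤ):ℚ) + (((0:ℤ):ℚ) - (v:ℚ))/(d:ℚ) := by
    field_simp
    push_cast
    ring
  rw [h1, Int.floor_intCast_add] at h
  have h2 : (#(filter (fun x => x ≡ v [ZMOD d]) (Ioc (0:ℤ) (↑k * d))) : ℤ) = k := by
    rw [h]; omega
  exact_mod_cast h2


lemma welch_aux_ord (p : ℕ) (hp : p.Prime) (e : ℕ) (he : 1 ≤ e) (g : ℤ)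
    (m : ℕ) (hm : m = orderOf (g : ZMod p))
    (u : (ZMod (p ^ e))ˣ) (hu : (u : ZMod (p ^ e)) = (g : ZMod (p ^ e))) :
    m ∣ orderOf u ∧ orderOf u ∣ m * p ^ (e - 1) := by
  haveI : Fact p.Prime := ⟨hp⟩
  haveI : NeZero (p ^ e) := ⟨pow_ne_zero _ hp.ne_zero⟩
  set f := ZMod.unitsMap (dvd_pow_self p (Nat.one_le_iff_ne_zero.mp he)) with hf
  have hfu : ((f u : (ZMod p)ˣ) : ZMod p) = ((g : ℤ) : ZMod p) := by
    rw [hf, ZMod.unitsMap_def]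
    rw [Units.coe_map]
    simp only [MonoidHom.coe_coe, hu]
    exact map_intCast _ g
  have hofu : orderOf (f u) = m := by rw [hm, ← orderOf_units, hfu]
  constructor
  · rw [← hofu]; exact orderOf_map_dvd f u
  · apply orderOf_dvd_of_pow_eq_one
    rw [pow_mul]
    have hker : u ^ m ∈ f.ker := by
      rw [MonoidHom.mem_ker, map_pow, ← hofu, pow_orderOf_eq_one]
    have hcard : Nat.card f.ker = p ^ (e - 1) := by
      have h1 := Subgroup.card_mul_index f.ker
      rw [Subgroup.index_ker, MonoidHom.range_eq_top_of_surjective f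
        (ZMod.unitsMap_surjective _)] at h1
      have h2 : Nat.card ((⊤ : Subgroup (ZMod p)ˣ)) = p - 1 := by
        rw [Subgroup.card_top, Nat.card_eq_fintype_card, ZMod.card_units_eq_totient,
          Nat.totient_prime hp]
      have h3 : Nat.card (ZMod (p ^ e))ˣ = p ^ (e - 1) * (p - 1) := by
        rw [Nat.card_eq_fintype_card, ZMod.card_units_eq_totient,
          Nat.totient_prime_pow hp (by omega)]
      rw [h2, h3] at h1
      have hp1 : 0 < p - 1 := by have := hp.two_le; omega
      exact Nat.eq_of_mul_eq_mul_right hp1 h1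
    have := Subgroup.orderOf_dvd_natCard f.ker hker
    rw [hcard] at this
    exact orderOf_dvd_iff_pow_eq_one.mp this


/-- The number of pairs `(x, c)` with `x ∈ {1, …, m·p^e}`, `c ∈ {1, …, m·p^(e-1)}`,
`p ∤ x`, and `g^(x-1+c) ≡ x (mod p^e)` is exactly `m²·p^(e-1)`. -/
theorem welch_count_pairs_mod_pe (p : ℕ) (hp : p.Prime) (hodd : p ≠ 2)
    (e : ℕ) (he : 1 ≤ e) (g : ℤ) (hg : ¬ (p : ℤ) ∣ g)
    (m : ℕ) (hm : m = orderOf (g : ZMod p))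
    (u : (ZMod (p ^ e))ˣ) (hu : (u : ZMod (p ^ e)) = (g : ZMod (p ^ e)))
    (S : Set (ℤ × ℤ))
    (hS : S = {xc : ℤ × ℤ | 1 ≤ xc.1 ∧ xc.1 ≤ (m : ℤ) * (p : ℤ) ^ e ∧
      1 ≤ xc.2 ∧ xc.2 ≤ (m : ℤ) * (p : ℤ) ^ (e - 1) ∧ ¬ (p : ℤ) ∣ xc.1 ∧
      (↑(u ^ (xc.1 - 1 + xc.2)) : ZMod (p ^ e)) = (xc.1 : ZMod (p ^ e))}) :
    S.ncard = m ^ 2 * p ^ (e - 1) := by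
  classical
  haveI : Fact p.Prime := ⟨hp⟩
  haveI : NeZero (p ^ e) := ⟨pow_ne_zero _ hp.ne_zero⟩
  obtain ⟨hmd, hdL⟩ := welch_aux_ord p hp e he g m hm u hu
  have hd0 : 0 < orderOf u := orderOf_pos u
  set d := orderOf u with hdd0
  have hdd : d = orderOf u := hdd0
  set L : ℕ := m * p ^ (e - 1) with hLdef
  set N : ℕ := m * p ^ e with hNdef
  set P : ℤ → Prop := fun x => ∃ k : ℤ,
    ((u ^ k : (ZMod (p ^ e))ˣ) : ZMod (p ^ e)) = (x : ZMod (p ^ e)) with hP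
  set T : Finset (ℤ × ℤ) := (Finset.Ioc (0 : ℤ) (N : ℤ) ×ˢ Finset.Ioc (0 : ℤ) (L : ℤ)).filter
      (fun xc => ¬ (p : ℤ) ∣ xc.1 ∧
        ((u ^ (xc.1 - 1 + xc.2) : (ZMod (p ^ e))ˣ) : ZMod (p ^ e)) = (xc.1 : ZMod (p ^ e)))
      with hT
  have hST : S = ↑T := by
    rw [hS, hT]
    ext ⟨x, c⟩
    simp only [Set.mem_setOf_eq, Finset.coe_filter, Finset.mem_product, Finset.mem_Ioc]
    constructor
    · rintro ⟨h1, h2, h3, h4, h5, h6⟩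
      exact ⟨⟨⟨by omega, by push_cast; exact_mod_cast h2⟩, by omega,
        by push_cast; exact_mod_cast h4⟩, h5, h6⟩
    · rintro ⟨⟨⟨h1, h2⟩, h3, h4⟩, h5, h6⟩
      refine ⟨by omega, ?_, by omega, ?_, h5, h6⟩
      · have := h2; push_cast at this; exact_mod_cast this
      · have := h4; push_cast at this; exact_mod_cast this
  rw [hST, Set.ncard_coe_finset]
  have hsum : T.card = ∑ x ∈ Finset.Ioc (0 : ℤ) (N : ℤ),
      ((Finset.Ioc (0 : ℤ) (L : ℤ)).filter (fun c => ¬ (p : ℤ) ∣ x ∧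
        ((u ^ (x - 1 + c) : (ZMod (p ^ e))ˣ) : ZMod (p ^ e)) = (x : ZMod (p ^ e)))).card := by
    rw [hT, Finset.card_filter, Finset.sum_product]
    simp only [← Finset.card_filter]
  have hinner : ∀ x ∈ Finset.Ioc (0 : ℤ) (N : ℤ),
      ((Finset.Ioc (0 : ℤ) (L : ℤ)).filter (fun c => ¬ (p : ℤ) ∣ x ∧
        ((u ^ (x - 1 + c) : (ZMod (p ^ e))ˣ) : ZMod (p ^ e)) = (x : ZMod (p ^ e)))).card
      = if P x then L / d else 0 := by
    intro x _
    classical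
    by_cases hPx : P x
    · rw [if_pos hPx]
      rw [hP] at hPx
      obtain ⟨k, hk⟩ := hPx
      have hpx : ¬ (p : ℤ) ∣ x := by
        intro hdvd
        have hx0 : ((x : ℤ) : ZMod p) = 0 := (ZMod.intCast_zmod_eq_zero_iff_dvd x p).mpr hdvd
        have h2 := congrArg (ZMod.castHom (dvd_pow_self p (Nat.one_le_iff_ne_zero.mp he)) (ZMod p)) hk
        rw [map_intCast] at h2
        have h3 : IsUnit ((ZMod.castHom (dvd_pow_self p (Nat.one_le_iff_ne_zero.mp he)) (ZMod p))
            ((u ^ k : (ZMod (p ^ e))ˣ) : ZMod (p ^ e))) :=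
          (u ^ k).isUnit.map _
        rw [h2, hx0] at h3
        exact h3.ne_zero (by exact rfl) -- isUnit zero contradiction
      have hcong : ∀ c ∈ Finset.Ioc (0 : ℤ) (L : ℤ),
          ((¬ (p : ℤ) ∣ x ∧
            ((u ^ (x - 1 + c) : (ZMod (p ^ e))ˣ) : ZMod (p ^ e)) = (x : ZMod (p ^ e)))
            ↔ c ≡ k + 1 - x [ZMOD (d : ℤ)]) := by
        intro c _
        rw [Int.modEq_iff_dvd]
        constructor
        · rintro ⟨-, hc⟩
          rw [← hk] at hc
          have : u ^ (x - 1 + c) = u ^ k := Units.ext hc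
          have h4 : u ^ (x - 1 + c - k) = 1 := by rw [zpow_sub, this, mul_inv_cancel]
          have h5 : ((orderOf u : ℤ)) ∣ (x - 1 + c - k) := orderOf_dvd_iff_zpow_eq_one.mpr h4
          rw [← hdd] at h5
          have heq : (k + 1 - x) - c = -(x - 1 + c - k) := by ring
          rw [heq]
          exact dvd_neg.mpr h5
        · intro hc
          refine ⟨hpx, ?_⟩
          have h5 : ((d : ℤ)) ∣ (x - 1 + c - k) := by
            have heq : (x - 1 + c - k) = -((k + 1 - x) - c) := by ring
            rw [heq]
            exact dvd_neg.mpr hc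
          rw [hdd] at h5
          have h4 : u ^ (x - 1 + c - k) = 1 := orderOf_dvd_iff_zpow_eq_one.mp h5
          have : u ^ (x - 1 + c) = u ^ k := by
            rw [zpow_sub] at h4
            rwa [mul_inv_eq_one] at h4
          rw [this, hk]
      rw [Finset.filter_congr hcong]
      have hLd : (L : ℤ) = ((L / d : ℕ) : ℤ) * (d : ℤ) := by
        exact_mod_cast (Nat.div_mul_cancel hdL).symm
      rw [hLd, welch_cnt (d : ℤ) (by exact_mod_cast hd0) (L / d) (k + 1 - x)]
    · rw [if_neg hPx]
      rw [Finset.card_eq_zero, Finset.filter_eq_empty_iff]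
      rintro c - ⟨-, hc⟩
      exact hPx (hP ▸ ⟨x - 1 + c, hc⟩)
  have houter : ((Finset.Ioc (0 : ℤ) (N : ℤ)).filter P).card = m * d := by
    set Q : ZMod (p ^ e) → Prop := fun y => ∃ k : ℤ, ((u ^ k : (ZMod (p ^ e))ˣ) : ZMod (p ^ e)) = y
      with hQ
    have hmap : ∀ x ∈ (Finset.Ioc (0 : ℤ) (N : ℤ)).filter P,
        ((x : ℤ) : ZMod (p ^ e)) ∈ Finset.univ.filter Q := by
      intro x hx
      rw [Finset.mem_filter] at hx ⊢
      refine ⟨Finset.mem_univ _, ?_⟩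
      have := hx.2
      rw [hP] at this
      exact this
    rw [Finset.card_eq_sum_card_fiberwise hmap]
    have hfib : ∀ y ∈ Finset.univ.filter Q,
        (((Finset.Ioc (0 : ℤ) (N : ℤ)).filter P).filter
          (fun x => ((x : ℤ) : ZMod (p ^ e)) = y)).card = m := by
      intro y hy
      rw [Finset.mem_filter] at hy
      obtain ⟨-, k, hk⟩ := hy
      have h1 : ((Finset.Ioc (0 : ℤ) (N : ℤ)).filter P).filter
          (fun x => ((x : ℤ) : ZMod (p ^ e)) = y)
          = (Finset.Ioc (0 : ℤ) (N : ℤ)).filter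
            (fun x => ((x : ℤ) : ZMod (p ^ e)) = y) := by
        ext x
        simp only [Finset.mem_filter, Finset.mem_Ioc, and_assoc]
        constructor
        · tauto
        · rintro ⟨hx1, hx2, hx3⟩
          exact ⟨hx1, hx2, hP ▸ ⟨k, by rw [hk, hx3]⟩, hx3⟩
      rw [h1]
      have h2 : ∀ x ∈ Finset.Ioc (0 : ℤ) (N : ℤ),
          (((x : ℤ) : ZMod (p ^ e)) = y ↔ x ≡ ((y.val : ℕ) : ℤ) [ZMOD ((p ^ e : ℕ) : ℤ)]) := by
        intro x _
        rw [← ZMod.intCast_eq_intCast_iff]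
        constructor
        · intro h; rw [h]; push_cast; rw [ZMod.natCast_rightInverse y]
        · intro h; rw [h]; push_cast; rw [ZMod.natCast_rightInverse y]
      rw [Finset.filter_congr h2]
      have hN2 : ((N : ℕ) : ℤ) = ((m : ℕ) : ℤ) * (((p ^ e : ℕ) : ℕ) : ℤ) := by
        rw [hNdef]; push_cast; ring
      rw [hN2, welch_cnt ((p ^ e : ℕ) : ℤ) (by exact_mod_cast pow_pos hp.pos e) m _]
    rw [Finset.sum_congr rfl hfib, Finset.sum_const, smul_eq_mul]
    have hcQ : (Finset.univ.filter Q).card = d := by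
      have himg : Finset.univ.filter Q
          = (Finset.univ.filter (fun v : (ZMod (p ^ e))ˣ => v ∈ Subgroup.zpowers u)).image
            (fun v : (ZMod (p ^ e))ˣ => (v : ZMod (p ^ e))) := by
        ext y
        simp only [Finset.mem_filter, Finset.mem_univ, true_and, Finset.mem_image, hQ]
        constructor
        · rintro ⟨k, hk⟩
          exact ⟨u ^ k, Subgroup.zpow_mem _ (Subgroup.mem_zpowers u) k, hk⟩
        · rintro ⟨v, hv, rfl⟩
          obtain ⟨k, hk⟩ := Subgroup.mem_zpowers_iff.mp hv
          exact ⟨k, by rw [hk]⟩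
      rw [himg, Finset.card_image_of_injective _ (fun _ _ h => Units.ext h)]
      have : (Finset.univ.filter (fun v : (ZMod (p ^ e))ˣ => v ∈ Subgroup.zpowers u)).card
          = Nat.card (Subgroup.zpowers u) := by
        rw [Nat.card_eq_fintype_card, Fintype.card_subtype]
      rw [this, Nat.card_zpowers, hdd]
    rw [hcQ, mul_comm]
  rw [hsum, Finset.sum_congr rfl hinner, ← Finset.sum_filter, Finset.sum_const, smul_eq_mul,
    houter, mul_assoc, Nat.mul_div_cancel' hdL, hLdef, pow_two, mul_assoc]
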